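/- Let mu be a probability measure on [0,1]. Then d(mu, delta_0) = 1 - 2*P_e(mu) <= sqrt(1 - B(mu)^2) <= sqrt(2*(1 - B(mu))), where delta_0 is the Dirac mass at 0, P_e(mu) = integral of (1-z)/2 d mu, B(mu) = integral of sqrt(1-z^2) d mu, and d is the Wasserstein-1 distance. -/

import Mathlib

open MeasureTheory

/-- Cumulative distribution function of a measure on `ℝ`. -/
noncomputable def cdf (μ : Measure ℝ) (x : ℝ) : ℝ := (μ (Set.Iic x)).toReal

/-- The Battacharyya functional of a `|D|`-distribution. -/
noncomputable def batta (μ : Measure ℝ) : ℝ := ∫ z, Real.sqrt (1 - z^2) ∂μ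

/-- The error probability functional of a `|D|`-distribution. -/
noncomputable def perr (μ : Measure ℝ) : ℝ := ∫ z, (1 - z)/2 ∂μ

lemma cauchy2 (a b c d : ℝ) : a*c + b*d ≤ Real.sqrt (a^2+b^2) * Real.sqrt (c^2+d^2) := by
  rcases le_or_gt (a*c + b*d) 0 with h | h
  · exact h.trans (mul_nonneg (Real.sqrt_nonneg _) (Real.sqrt_nonneg _))
  · rw [← Real.sqrt_mul (by positivity)]
    rw [show a*c + b*d = Real.sqrt ((a*c+b*d)^2) from (Real.sqrt_sq h.le).symm]
    apply Real.sqrt_le_sqrt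
    nlinarith [sq_nonneg (a*d - b*c)]

/-- Distance to the point mass at `0`:
`d(μ, δ₀) = 1 - 2 P_e(μ) ≤ √(1 - B(μ)²) ≤ √(2(1 - B(μ)))`. -/
theorem wasserstein_to_delta_zero (μ : Measure ℝ) [IsProbabilityMeasure μ]
    (hμ : μ (Set.Icc (0:ℝ) 1)ᶜ = 0) :
    (∫ z in (0:ℝ)..1, |cdf μ z - cdf (Measure.dirac (0:ℝ)) z|) = 1 - 2 * perr μ ∧
    1 - 2 * perr μ ≤ Real.sqrt (1 - (batta μ)^2) ∧
    Real.sqrt (1 - (batta μ)^2) ≤ Real.sqrt (2 * (1 - batta μ)) := by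
  have hae : ∀ᵐ z ∂μ, z ∈ Set.Icc (0:ℝ) 1 := by
    rw [ae_iff]
    exact measure_mono_null (fun z hz => hz) hμ
  -- integrability of id
  have hid_int : Integrable (fun z : ℝ => z) μ := by
    refine Integrable.mono' (integrable_const 1) aestronglyMeasurable_id ?_
    filter_upwards [hae] with z hz
    rw [Real.norm_eq_abs, abs_le]; exact ⟨le_trans (by norm_num) hz.1, hz.2⟩
  have hsq_int : Integrable (fun z : ℝ => Real.sqrt (1 - z^2)) μ := by
    refine Integrable.mono' (integrable_const 1) ?_ ?_
    · exact (Real.continuous_sqrt.comp (by continuity)).aestronglyMeasurable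
    · refine ae_of_all _ fun z => ?_
      rw [Real.norm_eq_abs, abs_of_nonneg (Real.sqrt_nonneg _)]
      calc Real.sqrt (1 - z^2) ≤ Real.sqrt 1 := Real.sqrt_le_sqrt (by nlinarith [sq_nonneg z])
      _ = 1 := Real.sqrt_one
  set I : ℝ := ∫ z, z ∂μ with hI
  set B : ℝ := batta μ with hB
  have hI_nonneg : 0 ≤ I := integral_nonneg_of_ae (by filter_upwards [hae] with z hz; exact hz.1)
  have hB_nonneg : 0 ≤ B := integral_nonneg fun z => Real.sqrt_nonneg _
  have hone : (∫ _ : ℝ, (1:ℝ) ∂μ) = 1 := by simp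
  have hB_le_one : B ≤ 1 := by
    have h := integral_mono hsq_int (integrable_const 1) fun z : ℝ =>
      (Real.sqrt_le_sqrt (by nlinarith [sq_nonneg z] : 1 - z^2 ≤ 1)).trans_eq Real.sqrt_one
    rw [hone] at h
    exact h
  have hperr : 1 - 2 * perr μ = I := by
    have : perr μ = (∫ z, ((1:ℝ) - z) ∂μ) / 2 := by
      rw [perr, integral_div]
    rw [this, integral_sub (integrable_const 1) hid_int, hone]
    ring
  -- Cauchy-Schwarz: I^2 + B^2 ≤ 1
  have key : I^2 + B^2 ≤ 1 := by
    set r : ℝ := Real.sqrt (I^2 + B^2) with hr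
    have hr_nonneg : 0 ≤ r := Real.sqrt_nonneg _
    have hr_sq : r^2 = I^2 + B^2 := Real.sq_sqrt (by positivity)
    have h1 : I^2 + B^2 ≤ r := by
      have hmono : (∫ z, (z * I + Real.sqrt (1 - z^2) * B) ∂μ) ≤ ∫ _ : ℝ, r ∂μ := by
        refine integral_mono_ae ((hid_int.mul_const I).add (hsq_int.mul_const B))
          (integrable_const r) ?_
        filter_upwards [hae] with z hz
        have h2 := cauchy2 z (Real.sqrt (1 - z^2)) I B
        have hz2 : Real.sqrt (1 - z^2) ^ 2 = 1 - z^2 :=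
          Real.sq_sqrt (by nlinarith [hz.1, hz.2])
        rw [hz2] at h2
        simpa using h2
      rw [integral_add (hid_int.mul_const I) (hsq_int.mul_const B), integral_mul_const,
        integral_mul_const] at hmono
      calc I^2 + B^2 = (∫ z, z ∂μ) * I + (∫ z, Real.sqrt (1 - z^2) ∂μ) * B := by
            rw [← hI, show (∫ z, Real.sqrt (1 - z^2) ∂μ) = B from hB.symm]; ring
        _ ≤ ∫ _ : ℝ, r ∂μ := hmono
        _ = r := by simp
    nlinarith
  refine ⟨?_, ?_, ?_⟩
  · -- the Wasserstein distance computation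
    rw [hperr]
    have hd : ∀ z ∈ Set.Ioc (0:ℝ) 1, |cdf μ z - cdf (Measure.dirac (0:ℝ)) z|
        = (μ (Set.Ioi z)).toReal := by
      intro z hz
      have h0 : cdf (Measure.dirac (0:ℝ)) z = 1 := by
        rw [cdf, Measure.dirac_apply_of_mem (by simpa using hz.1.le)]
        simp
      have h1 : cdf μ z ≤ 1 := by
        rw [cdf]
        exact ENNReal.toReal_le_of_le_ofReal zero_le_one (by simpa using prob_le_one)
      rw [h0, abs_of_nonpos (by linarith), cdf]
      have : μ (Set.Ioi z) = 1 - μ (Set.Iic z) := by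
        rw [← Set.compl_Iic, prob_compl_eq_one_sub measurableSet_Iic]
      rw [this, ENNReal.toReal_sub_of_le prob_le_one (by simp)]
      simp
    rw [intervalIntegral.integral_of_le zero_le_one,
      setIntegral_congr_fun measurableSet_Ioc hd]
    have hanti : Antitone fun z : ℝ => μ (Set.Ioi z) :=
      fun a b hab => measure_mono (Set.Ioi_subset_Ioi hab)
    rw [integral_toReal (hanti.measurable.aemeasurable) (ae_of_all _ fun z => measure_lt_top μ _)]
    have hlayer : ∫⁻ x, ENNReal.ofReal x ∂μ = ∫⁻ t in Set.Ioi (0:ℝ), μ (Set.Ioi t) :=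
      lintegral_eq_lintegral_meas_lt μ (by filter_upwards [hae] with z hz; exact hz.1)
        aemeasurable_id
    have hsplit : ∫⁻ t in Set.Ioi (0:ℝ), μ (Set.Ioi t)
        = ∫⁻ t in Set.Ioc (0:ℝ) 1, μ (Set.Ioi t) := by
      rw [← Set.Ioc_union_Ioi_eq_Ioi zero_le_one,
        lintegral_union measurableSet_Ioi (Set.Ioc_disjoint_Ioi le_rfl)]
      have : ∫⁻ t in Set.Ioi (1:ℝ), μ (Set.Ioi t) = 0 := by
        rw [← lintegral_zero (μ := volume.restrict (Set.Ioi (1:ℝ)))]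
        refine setLIntegral_congr_fun measurableSet_Ioi (fun t ht => ?_)
        refine measure_mono_null (fun x hx => ?_) hμ
        simp only [Set.mem_compl_iff, Set.mem_Icc, not_and, not_le]
        intro _
        exact lt_trans ht hx
      rw [this, add_zero]
    rw [← hsplit, ← hlayer,
      ← ofReal_integral_eq_lintegral_ofReal hid_int
        (by filter_upwards [hae] with z hz; exact hz.1),
      ENNReal.toReal_ofReal hI_nonneg]
  · rw [hperr]
    rw [show I = Real.sqrt (I^2) from (Real.sqrt_sq hI_nonneg).symm]
    exact Real.sqrt_le_sqrt (by linarith)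
  · exact Real.sqrt_le_sqrt (by nlinarith)
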